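/- (Proposition: equivalence of the SLS parameterization and the disturbance-feedback parameterization of Goulart et al.) Fix w ∈ ℝ^{(T+1)n}. Then the following two sets of trajectory pairs (x, u) ∈ ℝ^{(T+1)n} × ℝ^{(T+1)p} coincide: (i) the set of pairs for which there exist block lower triangular matrices Φ_x ∈ ℝ^{(T+1)n×(T+1)n} and Φ_u ∈ ℝ^{(T+1)p×(T+1)n} satisfying (I − ZÂ)Φ_x − ZB̂Φ_u = I, x = Φ_x w, and u = Φ_u w; and (ii) the set of pairs for which there exists a block lower triangular matrix M ∈ ℝ^{(T+1)p×(T+1)n} with u = Mw and (I − ZÂ)x = ZB̂u + w. -/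
import Mathlib


/-- Block lower triangular: the `((t,i),(s,j))` entry vanishes whenever `s > t`. -/
def BlockLT {a b T : ℕ}
    (M : Matrix (Fin (T + 1) × Fin a) (Fin (T + 1) × Fin b) ℝ) : Prop :=
  ∀ (t s : Fin (T + 1)) (i : Fin a) (j : Fin b), t < s → M (t, i) (s, j) = 0

/-- Strictly block lower triangular: the `((t,i),(s,j))` entry vanishes whenever `s ≥ t`. -/
def StrictBlockLT {a b T : ℕ}
    (M : Matrix (Fin (T + 1) × Fin a) (Fin (T + 1) × Fin b) ℝ) : Prop :=
  ∀ (t s : Fin (T + 1)) (i : Fin a) (j : Fin b), t ≤ s → M (t, i) (s, j) = 0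

/-- The block-downshift matrix `Z`: the `((t,i),(s,j))` entry is `1` iff `t = s + 1` and `i = j`. -/
def shiftZ (n T : ℕ) : Matrix (Fin (T + 1) × Fin n) (Fin (T + 1) × Fin n) ℝ :=
  fun r c => if (r.1 : ℕ) = (c.1 : ℕ) + 1 ∧ r.2 = c.2 then 1 else 0

/-- `Â = blkdiag(A, …, A)`. -/
def hatA {n : ℕ} (T : ℕ) (A : Matrix (Fin n) (Fin n) ℝ) :
    Matrix (Fin (T + 1) × Fin n) (Fin (T + 1) × Fin n) ℝ :=
  fun r c => if r.1 = c.1 then A r.2 c.2 else 0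

/-- `B̂ = blkdiag(B, …, B, 0)`. -/
def hatB {n p : ℕ} (T : ℕ) (B : Matrix (Fin n) (Fin p) ℝ) :
    Matrix (Fin (T + 1) × Fin n) (Fin (T + 1) × Fin p) ℝ :=
  fun r c => if r.1 = c.1 ∧ (c.1 : ℕ) < T then B r.2 c.2 else 0

section Aux
open Matrix Finset

variable {a b c n p T : ℕ}

lemma blockLT_one : BlockLT (1 : Matrix (Fin (T+1) × Fin a) (Fin (T+1) × Fin a) ℝ) := by
  intro t s i j h
  apply Matrix.one_apply_ne
  intro he
  exact absurd (congrArg Prod.fst he) h.ne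

lemma StrictBlockLT.blockLT {M : Matrix (Fin (T+1) × Fin a) (Fin (T+1) × Fin b) ℝ}
    (h : StrictBlockLT M) : BlockLT M :=
  fun t s i j hts => h t s i j hts.le

lemma blockLT_mul {M : Matrix (Fin (T+1) × Fin a) (Fin (T+1) × Fin b) ℝ}
    {N : Matrix (Fin (T+1) × Fin b) (Fin (T+1) × Fin c) ℝ}
    (hM : BlockLT M) (hN : BlockLT N) : BlockLT (M * N) := by
  intro t s i j h
  rw [Matrix.mul_apply]
  apply Finset.sum_eq_zero
  rintro ⟨r, m⟩ -
  by_cases hr : t < r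
  · rw [hM t r i m hr, zero_mul]
  · rw [hN r s m j (lt_of_le_of_lt (not_lt.mp hr) h), mul_zero]

lemma strict_mul_blockLT {M : Matrix (Fin (T+1) × Fin a) (Fin (T+1) × Fin b) ℝ}
    {N : Matrix (Fin (T+1) × Fin b) (Fin (T+1) × Fin c) ℝ}
    (hM : StrictBlockLT M) (hN : BlockLT N) : StrictBlockLT (M * N) := by
  intro t s i j h
  rw [Matrix.mul_apply]
  apply Finset.sum_eq_zero
  rintro ⟨r, m⟩ -
  by_cases hr : t ≤ r
  · rw [hM t r i m hr, zero_mul]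
  · rw [hN r s m j (lt_of_lt_of_le (not_le.mp hr) h), mul_zero]

lemma blockLT_add {M N : Matrix (Fin (T+1) × Fin a) (Fin (T+1) × Fin b) ℝ}
    (hM : BlockLT M) (hN : BlockLT N) : BlockLT (M + N) := by
  intro t s i j h
  rw [Matrix.add_apply, hM t s i j h, hN t s i j h, add_zero]

lemma blockLT_sum {ι : Type*} (S : Finset ι)
    (f : ι → Matrix (Fin (T+1) × Fin a) (Fin (T+1) × Fin b) ℝ)
    (h : ∀ k ∈ S, BlockLT (f k)) : BlockLT (∑ k ∈ S, f k) := by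
  intro t s i j hts
  rw [Matrix.sum_apply]
  exact Finset.sum_eq_zero fun k hk => h k hk t s i j hts

lemma blockLT_pow {N : Matrix (Fin (T+1) × Fin a) (Fin (T+1) × Fin a) ℝ}
    (hN : BlockLT N) (k : ℕ) : BlockLT (N ^ k) := by
  induction k with
  | zero => simpa using blockLT_one
  | succ k ih => rw [pow_succ]; exact blockLT_mul ih hN

lemma strict_pow_entry {N : Matrix (Fin (T+1) × Fin a) (Fin (T+1) × Fin a) ℝ}
    (hN : StrictBlockLT N) (k : ℕ) :
    ∀ (t s : Fin (T+1)) (i j : Fin a), (t : ℕ) < (s : ℕ) + k →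
      (N ^ k) (t, i) (s, j) = 0 := by
  induction k with
  | zero =>
    intro t s i j h
    rw [pow_zero]
    apply Matrix.one_apply_ne
    intro he
    have : (t : ℕ) = (s : ℕ) := congrArg (fun q => ((q.1 : Fin (T+1)) : ℕ)) he
    omega
  | succ k ih =>
    intro t s i j h
    rw [pow_succ', Matrix.mul_apply]
    apply Finset.sum_eq_zero
    rintro ⟨r, m⟩ -
    by_cases hr : t ≤ r
    · rw [hN t r i m hr, zero_mul]
    · have : (r : ℕ) < (t : ℕ) := Fin.lt_def.mp (not_le.mp hr)
      rw [ih r s m j (by omega), mul_zero]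

lemma strict_pow_nilpotent {N : Matrix (Fin (T+1) × Fin a) (Fin (T+1) × Fin a) ℝ}
    (hN : StrictBlockLT N) : N ^ (T + 1) = 0 := by
  ext ⟨t, i⟩ ⟨s, j⟩
  rw [Matrix.zero_apply]
  exact strict_pow_entry hN (T+1) t s i j (by have := t.isLt; omega)

lemma strict_shiftZ_mul_hatA (A : Matrix (Fin n) (Fin n) ℝ) :
    StrictBlockLT (shiftZ n T * hatA T A) := by
  intro t s i j h
  rw [Matrix.mul_apply]
  apply Finset.sum_eq_zero
  rintro ⟨r, m⟩ -
  simp only [shiftZ, hatA]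
  by_cases h1 : (t : ℕ) = (r : ℕ) + 1 ∧ i = m
  · rw [if_pos h1]
    have hts : (t : ℕ) ≤ (s : ℕ) := Fin.le_def.mp h
    have hrs : r ≠ s := by
      intro he; rw [he] at h1; omega
    rw [if_neg hrs, mul_zero]
  · rw [if_neg h1, zero_mul]

lemma strict_shiftZ_mul_hatB (B : Matrix (Fin n) (Fin p) ℝ) :
    StrictBlockLT (shiftZ n T * hatB T B) := by
  intro t s i j h
  rw [Matrix.mul_apply]
  apply Finset.sum_eq_zero
  rintro ⟨r, m⟩ -
  simp only [shiftZ, hatB]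
  by_cases h1 : (t : ℕ) = (r : ℕ) + 1 ∧ i = m
  · rw [if_pos h1]
    have hts : (t : ℕ) ≤ (s : ℕ) := Fin.le_def.mp h
    have hrs : ¬ (r = s ∧ (s : ℕ) < T) := by
      rintro ⟨he, -⟩; rw [he] at h1; omega
    rw [if_neg hrs, mul_zero]
  · rw [if_neg h1, zero_mul]

lemma geom_inverses {N : Matrix (Fin (T+1) × Fin a) (Fin (T+1) × Fin a) ℝ}
    (hN : StrictBlockLT N) :
    (∑ k ∈ Finset.range (T+1), N ^ k) * (1 - N) = 1 ∧
      (1 - N) * (∑ k ∈ Finset.range (T+1), N ^ k) = 1 := by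
  set S := ∑ k ∈ Finset.range (T+1), N ^ k with hS
  have hnil : N ^ (T+1) = 0 := strict_pow_nilpotent hN
  have h1 : S * (N - 1) = -1 := by
    rw [hS, geom_sum_mul, hnil, zero_sub]
  have h2 : (N - 1) * S = -1 := by
    rw [hS, mul_geom_sum, hnil, zero_sub]
  constructor
  · calc S * (1 - N) = -(S * (N - 1)) := by rw [← mul_neg, neg_sub]
    _ = 1 := by rw [h1, neg_neg]
  · calc (1 - N) * S = -((N - 1) * S) := by rw [← neg_mul, neg_sub]
    _ = 1 := by rw [h2, neg_neg]

end Aux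

/-- Equivalence of the SLS parameterization and the disturbance-feedback parameterization
of Goulart et al.: for a fixed disturbance `w`, a trajectory pair `(x, u)` is realized by
some block lower triangular system responses `(Φ_x, Φ_u)` satisfying
`(I − ZÂ)Φ_x − ZB̂Φ_u = I`, `x = Φ_x w`, `u = Φ_u w`, if and only if it is realized by
some block lower triangular disturbance-feedback gain `M` with `u = Mw` and
`(I − ZÂ)x = ZB̂u + w`. -/
theorem sls_eq_disturbance_feedback {n p T : ℕ}
    (A : Matrix (Fin n) (Fin n) ℝ) (B : Matrix (Fin n) (Fin p) ℝ)
    (w x : Fin (T + 1) × Fin n → ℝ) (u : Fin (T + 1) × Fin p → ℝ) :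
    (∃ (Φx : Matrix (Fin (T + 1) × Fin n) (Fin (T + 1) × Fin n) ℝ)
       (Φu : Matrix (Fin (T + 1) × Fin p) (Fin (T + 1) × Fin n) ℝ),
        BlockLT Φx ∧ BlockLT Φu ∧
        (1 - shiftZ n T * hatA T A) * Φx - shiftZ n T * hatB T B * Φu = 1 ∧
        x = Φx.mulVec w ∧ u = Φu.mulVec w) ↔
    (∃ M : Matrix (Fin (T + 1) × Fin p) (Fin (T + 1) × Fin n) ℝ,
        BlockLT M ∧ u = M.mulVec w ∧
        (1 - shiftZ n T * hatA T A).mulVec x =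
          (shiftZ n T * hatB T B).mulVec u + w) := by
  constructor
  · rintro ⟨Φx, Φu, hΦx, hΦu, hEq, hx, hu⟩
    refine ⟨Φu, hΦu, hu, ?_⟩
    have hEq' : (1 - shiftZ n T * hatA T A) * Φx = 1 + shiftZ n T * hatB T B * Φu :=
      sub_eq_iff_eq_add.mp hEq
    rw [hx, hu, Matrix.mulVec_mulVec, Matrix.mulVec_mulVec, hEq',
      Matrix.add_mulVec, Matrix.one_mulVec]
    exact add_comm _ _
  · rintro ⟨M, hM, hu, hx⟩
    set ZA := shiftZ n T * hatA T A with hZA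
    set ZB := shiftZ n T * hatB T B with hZB
    have hsA : StrictBlockLT ZA := strict_shiftZ_mul_hatA A
    have hsB : StrictBlockLT ZB := strict_shiftZ_mul_hatB B
    set S := ∑ k ∈ Finset.range (T+1), ZA ^ k with hSdef
    obtain ⟨hgeomL, hgeomR⟩ := geom_inverses hsA
    refine ⟨S * (1 + ZB * M), M, ?_, hM, ?_, ?_, hu⟩
    · exact blockLT_mul
        (blockLT_sum _ _ fun k _ => blockLT_pow hsA.blockLT k)
        (blockLT_add blockLT_one (strict_mul_blockLT hsB hM).blockLT)
    · calc (1 - ZA) * (S * (1 + ZB * M)) - ZB * M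
          = (1 - ZA) * S * (1 + ZB * M) - ZB * M := by rw [mul_assoc]
        _ = 1 := by rw [hgeomR, one_mul, add_sub_cancel_right]
    · have hw : (1 + ZB * M).mulVec w = (1 - ZA).mulVec x := by
        rw [Matrix.add_mulVec, Matrix.one_mulVec, hx, ← Matrix.mulVec_mulVec, ← hu]
        exact add_comm _ _
      rw [← Matrix.mulVec_mulVec, hw, Matrix.mulVec_mulVec, hgeomL, Matrix.one_mulVec]
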